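/- For each positive integer n, s(n) = 3n + 2·σ(n), where σ(n) denotes the sum of the digits in the M-expansion of n. -/

import Mathlib

/-- `Alist k` is the list `A_{k+1}`: `A_1 = [5]`, `A_{k+1} = A_k ++ A_k ++ [1]`. -/
def Alist : ℕ → List ℕ
  | 0 => [5]
  | k+1 => Alist k ++ Alist k ++ [1]

/-- `aseq n` is the `n`-th term (1-indexed) of the limit of the lists `A_k`;
`aseq 0 = 0` by convention. -/
def aseq (n : ℕ) : ℕ := (Alist n).getD (n - 1) 0

/-- Partial sums: `s n = a_1 + ⋯ + a_n`, `s 0 = 0`. -/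
def s (n : ℕ) : ℕ := ∑ i ∈ Finset.Icc 1 n, aseq i

lemma Alist_length (k : ℕ) : (Alist k).length = 2 ^ (k+1) - 1 := by
  induction k with
  | zero => rfl
  | succ k ih =>
    have h : 1 ≤ 2 ^ (k+1) := Nat.one_le_two_pow
    simp [Alist, ih, pow_succ]
    omega

lemma Alist_prefix {k m : ℕ} (h : k ≤ m) : Alist k <+: Alist m := by
  induction m with
  | zero => simpa [Nat.le_zero.mp h]
  | succ m ih =>
    rcases eq_or_lt_of_le h with h' | h'
    · exact h' ▸ List.prefix_refl _
    · exact (ih (Nat.lt_succ_iff.mp h')).trans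
        (by rw [Alist]; exact ((Alist m).prefix_append _).trans (List.prefix_append _ _))

lemma getD_prefix {l₁ l₂ : List ℕ} (h : l₁ <+: l₂) {i : ℕ} (hi : i < l₁.length) :
    l₁.getD i 0 = l₂.getD i 0 := by
  obtain ⟨t, rfl⟩ := h
  simp [List.getD, List.getElem?_append_left hi]

/-- stability: for `1 ≤ n ≤ 2^(k+1)-1`, `aseq n` is entry `n-1` of `Alist k`. -/
lemma aseq_eq (k n : ℕ) (h1 : 1 ≤ n) (h2 : n ≤ 2 ^ (k+1) - 1) :
    aseq n = (Alist k).getD (n-1) 0 := by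
  have hn : n - 1 < (Alist n).length := by
    rw [Alist_length]
    have := Nat.lt_two_pow_self (n := n)
    omega
  have hk : n - 1 < (Alist k).length := by rw [Alist_length]; omega
  rcases le_total n k with h | h
  · exact getD_prefix (Alist_prefix h) hn
  · exact (getD_prefix (Alist_prefix h) hk).symm

lemma aseq_shift (k : ℕ) {i : ℕ} (h1 : 1 ≤ i) (h2 : i ≤ 2 ^ (k+1) - 1) :
    aseq (2 ^ (k+1) - 1 + i) = aseq i := by
  have hM : (Alist k).length = 2 ^ (k+1) - 1 := Alist_length k
  have h2' : 2 ^ (k+1) - 1 + i ≤ 2 ^ (k+2) - 1 := by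
    have : 1 ≤ 2 ^ (k+1) := Nat.one_le_two_pow
    rw [pow_succ 2 (k+1)]; omega
  rw [aseq_eq (k+1) _ (by omega) h2', aseq_eq k i h1 h2]
  show (Alist k ++ Alist k ++ [1]).getD _ 0 = _
  have hidx : 2 ^ (k+1) - 1 + i - 1 = (Alist k).length + (i - 1) := by omega
  have hi : i - 1 < (Alist k).length := by omega
  rw [hidx]
  simp only [List.getD, List.getD_eq_getElem?_getD]
  rw [List.getElem?_append_left (l₂ := [1]) (by rw [List.length_append]; omega),
    List.getElem?_append_right (Nat.le_add_right _ _)]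
  simp

lemma aseq_last (k : ℕ) : aseq (2 ^ (k+2) - 1) = 1 := by
  have hM : (Alist k).length = 2 ^ (k+1) - 1 := Alist_length k
  have h1 : 1 ≤ 2 ^ (k+1) := Nat.one_le_two_pow
  have h2 : 1 ≤ 2 ^ (k+2) := Nat.one_le_two_pow
  rw [aseq_eq (k+1) _ (by omega) le_rfl]
  show (Alist k ++ Alist k ++ [1]).getD _ 0 = _
  have hidx : 2 ^ (k+2) - 1 - 1 = (Alist k ++ Alist k).length := by
    simp only [List.length_append, hM]
    rw [pow_succ 2 (k+1)]; omega
  rw [hidx]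
  simp only [List.getD, List.getD_eq_getElem?_getD]
  rw [List.getElem?_append_right (le_refl (Alist k ++ Alist k).length)]
  simp

lemma s_eq_Ioc (n : ℕ) : s n = ∑ i ∈ Finset.Ioc 0 n, aseq i := by
  rw [s, ← Finset.Icc_add_one_left_eq_Ioc, zero_add]

/-- split: for r ≤ M = 2^(k+1)-1, s (M + r) = s M + s r. -/
lemma s_split (k r : ℕ) (hr : r ≤ 2 ^ (k+1) - 1) :
    s (2 ^ (k+1) - 1 + r) = s (2 ^ (k+1) - 1) + s r := by
  set M := 2 ^ (k+1) - 1 with hMdef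
  rw [s_eq_Ioc, s_eq_Ioc, s_eq_Ioc,
    ← Finset.sum_Ioc_consecutive aseq (Nat.zero_le M) (Nat.le_add_right M r)]
  congr 1
  have : Finset.Ioc M (M + r) = Finset.map (addLeftEmbedding M) (Finset.Ioc 0 r) := by
    rw [Finset.map_add_left_Ioc]; simp
  rw [this, Finset.sum_map]
  exact Finset.sum_congr rfl fun i hi => by
    simp only [Finset.mem_Ioc] at hi
    exact aseq_shift k hi.1 (le_trans hi.2 hr)

lemma s_mersenne (k : ℕ) : s (2 ^ (k+1) - 1) = 6 * 2 ^ k - 1 := by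
  induction k with
  | zero =>
    have h : s 1 = aseq 1 := by simp [s]
    norm_num [h]
    rfl
  | succ k ih =>
    have h1 : 1 ≤ 2 ^ (k+1) := Nat.one_le_two_pow
    have hsplit := s_split k (2 ^ (k+1) - 1) le_rfl
    have hstep : 2 ^ (k+2) - 1 = (2 ^ (k+1) - 1 + (2 ^ (k+1) - 1)) + 1 := by
      rw [pow_succ 2 (k+1)]; omega
    have : s (2 ^ (k+2) - 1) = s (2 ^ (k+1) - 1 + (2 ^ (k+1) - 1)) + aseq (2 ^ (k+2) - 1) := by
      rw [s_eq_Ioc, s_eq_Ioc, hstep, Finset.sum_Ioc_succ_top (Nat.zero_le _), ← hstep]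
    rw [this, hsplit, ih, aseq_last]
    have h2 : 1 ≤ 2 ^ k := Nat.one_le_two_pow
    rw [pow_succ 2 k]; omega

/-- The largest `ℓ` with `2^ℓ - 1 ≤ n` (for `n ≥ 1`). -/
def maxM (n : ℕ) : ℕ := Nat.findGreatest (fun ℓ => 2 ^ ℓ - 1 ≤ n) n

/-- `Mdig n i` is the digit `ε_i` in the greedy M-expansion
`n = ε_1·M_1 + ⋯ + ε_ℓ·M_ℓ` (with `M_i = 2^i - 1`): repeatedly subtract the
largest Mersenne number `M_ℓ ≤ n`, recording a digit `2` if the remainder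
equals `M_ℓ` again. -/
def Mdig (n : ℕ) : ℕ → ℕ :=
  if h : n = 0 then fun _ => 0
  else
    let ℓ := maxM n
    let r := n - (2 ^ ℓ - 1)
    if r = 2 ^ ℓ - 1 then fun i => if i = ℓ then 2 else 0
    else fun i => (if i = ℓ then 1 else 0) + Mdig r i
termination_by n
decreasing_by
  have h1 : 1 ≤ maxM n :=
    Nat.le_findGreatest (Nat.one_le_iff_ne_zero.mpr h) (by simpa using Nat.one_le_iff_ne_zero.mpr h)
  have h2 : 2 ≤ 2 ^ maxM n := by
    calc (2 : ℕ) = 2 ^ 1 := rfl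
    _ ≤ 2 ^ maxM n := Nat.pow_le_pow_right (by norm_num) h1
  have h3 : 1 ≤ n := Nat.one_le_iff_ne_zero.mpr h
  omega

/-- Sum of the M-digits of `n` (all nonzero digits have index `≤ n`). -/
def sigmaM (n : ℕ) : ℕ := ∑ i ∈ Finset.Icc 1 n, Mdig n i

lemma maxM_pos {n : ℕ} (hn : 1 ≤ n) : 1 ≤ maxM n :=
  Nat.le_findGreatest hn (by simpa using hn)

lemma maxM_le (n : ℕ) : maxM n ≤ n := Nat.findGreatest_le n

lemma mersenne_maxM_le {n : ℕ} (hn : 1 ≤ n) : 2 ^ maxM n - 1 ≤ n := by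
  have := Nat.findGreatest_spec (P := fun ℓ => 2 ^ ℓ - 1 ≤ n) (m := 1) (n := n) hn
    (by simpa using hn)
  simpa [maxM] using this

lemma lt_mersenne_succ_maxM (n : ℕ) : n < 2 ^ (maxM n + 1) - 1 := by
  by_cases h : maxM n + 1 ≤ n
  · have := Nat.findGreatest_is_greatest (P := fun ℓ => 2 ^ ℓ - 1 ≤ n)
      (Nat.lt_succ_self _) h
    simpa [maxM] using Nat.lt_of_not_le (by simpa [maxM] using this)
  · have h1 : n ≤ maxM n := by omega
    have h2 : n + 1 < 2 ^ (n + 1) := Nat.lt_two_pow_self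
    have h3 : 2 ^ (n + 1) ≤ 2 ^ (maxM n + 1) := Nat.pow_le_pow_right (by norm_num) (by omega)
    omega

lemma Mdig_eq_zero_of_lt : ∀ m : ℕ, ∀ i : ℕ, m < i → Mdig m i = 0 := by
  intro m
  induction m using Nat.strong_induction_on with
  | _ m ih =>
    intro i hi
    rw [Mdig]
    by_cases h0 : m = 0
    · simp [h0]
    · have hm : 1 ≤ m := Nat.one_le_iff_ne_zero.mpr h0
      have hℓ : maxM m ≤ m := maxM_le m
      have hℓ1 : 1 ≤ maxM m := maxM_pos hm
      have h2 : 2 ≤ 2 ^ maxM m := by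
        calc (2:ℕ) = 2^1 := rfl
        _ ≤ _ := Nat.pow_le_pow_right (by norm_num) hℓ1
      rw [dif_neg h0]
      have hne : ¬ i = maxM m := by omega
      split
      · simp [hne]
      · simp only [if_neg hne, zero_add]
        exact ih _ (by omega) i (by omega)

lemma sigmaM_two {n : ℕ} (hn : 1 ≤ n) (h : n - (2 ^ maxM n - 1) = 2 ^ maxM n - 1) :
    sigmaM n = 2 := by
  have hd : ∀ i, Mdig n i = if i = maxM n then 2 else 0 := by
    intro i; rw [Mdig]; simp [Nat.one_le_iff_ne_zero.mp hn, h]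
  have hmem : maxM n ∈ Finset.Icc 1 n := by
    simp [Finset.mem_Icc, maxM_pos hn, maxM_le n]
  rw [sigmaM]
  simp only [hd]
  rw [Finset.sum_ite_eq' (Finset.Icc 1 n) (maxM n) (fun _ => 2), if_pos hmem]

lemma sigmaM_rec {n : ℕ} (hn : 1 ≤ n) (h : n - (2 ^ maxM n - 1) ≠ 2 ^ maxM n - 1) :
    sigmaM n = 1 + sigmaM (n - (2 ^ maxM n - 1)) := by
  set r := n - (2 ^ maxM n - 1) with hr
  have hd : ∀ i, Mdig n i = (if i = maxM n then 1 else 0) + Mdig r i := by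
    intro i; rw [Mdig]; simp [Nat.one_le_iff_ne_zero.mp hn, ← hr, h]
  have hmem : maxM n ∈ Finset.Icc 1 n := by
    simp [Finset.mem_Icc, maxM_pos hn, maxM_le n]
  rw [sigmaM]
  simp only [hd]
  rw [Finset.sum_add_distrib,
    Finset.sum_ite_eq' (Finset.Icc 1 n) (maxM n) (fun _ => 1), if_pos hmem]
  congr 1
  rw [sigmaM]
  refine (Finset.sum_subset (Finset.Icc_subset_Icc_right (by omega)) ?_).symm
  intro i hi hni
  simp only [Finset.mem_Icc] at hi hni
  exact Mdig_eq_zero_of_lt r i (by omega)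

set_option linter.unnecessarySimpa false in
lemma main_aux : ∀ n : ℕ, s n = 3 * n + 2 * sigmaM n := by
  intro n
  induction n using Nat.strong_induction_on with
  | _ n ih =>
    by_cases h0 : n = 0
    · simp [h0, s, sigmaM]
    have hn : 1 ≤ n := Nat.one_le_iff_ne_zero.mpr h0
    obtain ⟨k, hk⟩ := Nat.exists_eq_succ_of_ne_zero (Nat.one_le_iff_ne_zero.mp (maxM_pos hn))
    have hM : 2 ^ maxM n - 1 ≤ n := mersenne_maxM_le hn
    have hlt : n < 2 ^ (maxM n + 1) - 1 := lt_mersenne_succ_maxM n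
    set r := n - (2 ^ maxM n - 1) with hrdef
    have hk' : 2 ^ maxM n = 2 ^ (k + 1) := by rw [hk]
    have hp : (2:ℕ) ^ (maxM n + 1) = 2 * 2 ^ maxM n := by ring
    have h2 : 2 ≤ 2 ^ maxM n := by
      rw [hk']
      calc (2:ℕ) = 2 ^ 1 := rfl
      _ ≤ 2 ^ (k + 1) := Nat.pow_le_pow_right (by norm_num) (by omega)
    have hrle : r ≤ 2 ^ maxM n - 1 := by omega
    have hneq : n = 2 ^ maxM n - 1 + r := by omega
    have hA : s n = 6 * 2 ^ k - 1 + s r := by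
      rw [hneq, hk', s_split k r (hk' ▸ hrle), s_mersenne]
    have hrlt : r < n := by omega
    have e : (2:ℕ) ^ (k + 1) = 2 * 2 ^ k := by ring
    have hx : 1 ≤ 2 ^ k := Nat.one_le_two_pow
    by_cases hcase : r = 2 ^ maxM n - 1
    · have hσ : sigmaM n = 2 := sigmaM_two hn (by omega)
      have hsr : s r = 6 * 2 ^ k - 1 := by rw [hcase, hk', s_mersenne]
      rw [hA, hsr, hσ]
      omega
    · have hσ : sigmaM n = 1 + sigmaM (n - (2 ^ maxM n - 1)) := sigmaM_rec hn (by omega)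
      rw [← hrdef] at hσ
      have hsr := ih r hrlt
      rw [hA, hsr, hσ]
      omega

/-- For each positive integer `n`, `s(n) = 3n + 2·σ(n)`, where `σ(n)` is the
sum of the digits of the M-expansion of `n`. -/
theorem s_eq_three_n_add_two_sigma (n : ℕ) (hn : 1 ≤ n) :
    s n = 3 * n + 2 * sigmaM n := main_aux n
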